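/- arXiv:1805.00703 — 3 statements merged into one kernel-verified Lean document; each statement's English description precedes it below -/
import Mathlib

section
/- Let f ∈ L¹(ℝᵈ), g ∈ L^p(ℝᵈ) with 1 ≤ p ≤ ∞, and let μ : ℝᵈ → GL(d,ℝ) be a measurable function. Then the μ-adaptive convolution f ∗^p_μ g belongs to L^p(ℝᵈ) and satisfies Young's inequality ‖f ∗^p_μ g‖_{L^p} ≤ ‖f‖_{L¹} · ‖g‖_{L^p}. -/
open MeasureTheory Matrix
open scoped ENNReal

namespace AdaptiveYoung

lemma iSup_rpow_seq (f : ℕ → ℝ≥0∞) {p : ℝ} (hp : 0 < p) :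
    (⨆ n, f n) ^ p = ⨆ n, f n ^ p :=
  Monotone.map_iSup_of_continuousAt ENNReal.continuous_rpow_const.continuousAt
    (ENNReal.monotone_rpow_of_nonneg hp.le) (by simp [ENNReal.zero_rpow_of_pos hp])

/-- Minkowski's integral inequality for `ℝ≥0∞`-valued functions. -/
theorem lintegral_minkowski {α β : Type*} [MeasurableSpace α] [MeasurableSpace β]
    (μ : Measure α) (ν : Measure β) [SigmaFinite μ] [SFinite ν]
    {p : ℝ} (hp : 1 ≤ p) {F : α → β → ℝ≥0∞} (hF : Measurable (Function.uncurry F)) :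
    (∫⁻ x, (∫⁻ y, F x y ∂ν) ^ p ∂μ) ^ (1 / p) ≤ ∫⁻ y, (∫⁻ x, F x y ^ p ∂μ) ^ (1 / p) ∂ν := by
  have hFz : Measurable fun z : α × β => F z.1 z.2 := hF
  rcases eq_or_lt_of_le hp with hp1 | hp1
  · subst hp1
    simp only [ENNReal.rpow_one, one_div_one]
    exact le_of_eq (lintegral_lintegral_swap hF.aemeasurable)
  · have hp0 : (0:ℝ) < p := lt_of_lt_of_le one_pos hp
    have hpq := Real.HolderConjugate.conjExponent hp1
    set q : ℝ := p.conjExponent with hq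
    have hq0 : (0:ℝ) < q := hpq.symm.pos
    have hsub1 : (0:ℝ) ≤ p - 1 := by linarith
    set φ : α → ℝ≥0∞ := fun x => ∫⁻ y, F x y ∂ν with hφdef
    have hφm : Measurable φ := hF.lintegral_prod_right
    set R : ℝ≥0∞ := ∫⁻ y, (∫⁻ x, F x y ^ p ∂μ) ^ (1 / p) ∂ν with hRdef
    set A : ℕ → Set α := spanningSets μ with hAdef
    set ψ : ℕ → α → ℝ≥0∞ := fun n x => (A n).indicator (fun x => min (φ x) n) x with hψdef
    have hψm : ∀ n, Measurable (ψ n) := fun n =>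
      (hφm.min measurable_const).indicator (measurableSet_spanningSets μ n)
    have hψ_le : ∀ n x, ψ n x ≤ φ x := fun n x =>
      le_trans (Set.indicator_le_self _ _ x) (min_le_left _ _)
    have hψ_le_n : ∀ n x, ψ n x ≤ (n : ℝ≥0∞) := fun n x =>
      le_trans (Set.indicator_le_self _ _ x) (min_le_right _ _)
    have hψ_ne_top : ∀ n x, ψ n x ≠ ⊤ := fun n x =>
      ne_top_of_le_ne_top (ENNReal.natCast_ne_top n) (hψ_le_n n x)
    set In : ℕ → ℝ≥0∞ := fun n => ∫⁻ x, ψ n x ^ p ∂μ with hIndef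
    have hIn_top : ∀ n, In n ≠ ⊤ := by
      intro n
      have hb : ∀ x, ψ n x ^ p ≤ (A n).indicator (fun _ => (n : ℝ≥0∞) ^ p) x := by
        intro x
        by_cases hx : x ∈ A n
        · rw [Set.indicator_of_mem hx]
          exact ENNReal.rpow_le_rpow (hψ_le_n n x) hp0.le
        · have hz : ψ n x = 0 := Set.indicator_of_notMem hx _
          rw [hz, ENNReal.zero_rpow_of_pos hp0]
          exact zero_le
      refine ne_of_lt (lt_of_le_of_lt (lintegral_mono hb) ?_)
      rw [lintegral_indicator_const (measurableSet_spanningSets μ n)]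
      exact ENNReal.mul_lt_top
        (ENNReal.rpow_lt_top_of_nonneg hp0.le (ENNReal.natCast_ne_top n))
        (measure_spanningSets_lt_top μ n)
    have hexp : ∀ x : ℝ≥0∞, (x ^ (p - 1)) ^ q = x ^ p := by
      intro x
      rw [← ENNReal.rpow_mul]
      congr 1
      rw [hq, Real.conjExponent, mul_comm, div_mul_cancel₀ _ (sub_ne_zero.mpr hp1.ne')]
    have key : ∀ n, In n ≤ In n ^ (1 / q) * R := by
      intro n
      have hψpm : Measurable fun x => ψ n x ^ (p - 1) :=
        ENNReal.continuous_rpow_const.measurable.comp (hψm n)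
      have hψp_ne_top : ∀ x, ψ n x ^ (p - 1) ≠ ⊤ := fun x =>
        ENNReal.rpow_ne_top_of_nonneg hsub1 (hψ_ne_top n x)
      have h1 : In n ≤ ∫⁻ x, ψ n x ^ (p - 1) * φ x ∂μ := by
        refine lintegral_mono fun x => ?_
        have : ψ n x ^ p = ψ n x ^ (p - 1) * ψ n x := by
          conv_lhs => rw [show p = (p - 1) + 1 by ring]
          rw [ENNReal.rpow_add_of_nonneg _ _ hsub1 zero_le_one, ENNReal.rpow_one]
        rw [this]
        exact mul_le_mul_right (hψ_le n x) _
      have h2 : ∫⁻ x, ψ n x ^ (p - 1) * φ x ∂μ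
          = ∫⁻ y, ∫⁻ x, ψ n x ^ (p - 1) * F x y ∂μ ∂ν := by
        have e1 : ∀ x, ψ n x ^ (p - 1) * φ x = ∫⁻ y, ψ n x ^ (p - 1) * F x y ∂ν := fun x =>
          (lintegral_const_mul' _ _ (hψp_ne_top x)).symm
        simp_rw [e1]
        exact lintegral_lintegral_swap
          (((hψpm.comp measurable_fst).mul hFz).aemeasurable)
      have h3 : ∫⁻ y, ∫⁻ x, ψ n x ^ (p - 1) * F x y ∂μ ∂ν
          ≤ ∫⁻ y, In n ^ (1 / q) * (∫⁻ x, F x y ^ p ∂μ) ^ (1 / p) ∂ν := by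
        refine lintegral_mono fun y => ?_
        calc ∫⁻ x, ψ n x ^ (p - 1) * F x y ∂μ
            ≤ (∫⁻ x, (ψ n x ^ (p - 1)) ^ q ∂μ) ^ (1 / q) * (∫⁻ x, F x y ^ p ∂μ) ^ (1 / p) :=
              ENNReal.lintegral_mul_le_Lp_mul_Lq μ hpq.symm hψpm.aemeasurable
                (hFz.comp (measurable_id.prodMk measurable_const)).aemeasurable
          _ = In n ^ (1 / q) * (∫⁻ x, F x y ^ p ∂μ) ^ (1 / p) := by
              simp only [hIndef]
              simp_rw [hexp]
      have h4 : ∫⁻ y, In n ^ (1 / q) * (∫⁻ x, F x y ^ p ∂μ) ^ (1 / p) ∂ν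
          = In n ^ (1 / q) * R :=
        lintegral_const_mul' _ _ (ENNReal.rpow_ne_top_of_nonneg (by positivity) (hIn_top n))
      exact le_trans h1 (le_trans (le_of_eq h2) (le_trans h3 (le_of_eq h4)))
    -- from the key estimate, deduce `In n ^ (1/p) ≤ R`
    have keyn : ∀ n, In n ^ (1 / p) ≤ R := by
      intro n
      by_cases h0 : In n = 0
      · rw [h0, ENNReal.zero_rpow_of_pos (by positivity)]
        exact zero_le
      · have hq' : In n ^ (1 / q) ≠ 0 := by
          simp [ENNReal.rpow_eq_zero_iff, h0, hIn_top n]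
        have hqt : In n ^ (1 / q) ≠ ⊤ :=
          ENNReal.rpow_ne_top_of_nonneg (by positivity) (hIn_top n)
        have hsplit : In n = In n ^ (1 / p) * In n ^ (1 / q) := by
          rw [← ENNReal.rpow_add_of_nonneg _ _ (by positivity) (by positivity)]
          rw [show 1 / p + 1 / q = 1 by
            rw [one_div, one_div]; exact hpq.inv_add_inv_eq_one]
          exact (ENNReal.rpow_one _).symm
        have hk : In n ^ (1 / p) * In n ^ (1 / q) ≤ R * In n ^ (1 / q) := by
          rw [← hsplit]
          exact (key n).trans (le_of_eq (mul_comm _ _))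
        exact (ENNReal.mul_le_mul_iff_left hq' hqt).mp hk
    -- monotone convergence
    have hmono : Monotone ψ := by
      intro n m hnm x
      by_cases hx : x ∈ A n
      · rw [show ψ n x = min (φ x) n from Set.indicator_of_mem hx _,
          show ψ m x = min (φ x) m from
            Set.indicator_of_mem (monotone_spanningSets μ hnm hx) _]
        exact min_le_min le_rfl (Nat.cast_le.mpr hnm)
      · rw [show ψ n x = 0 from Set.indicator_of_notMem hx _]
        exact zero_le
    have hsup : ∀ x, ⨆ n, ψ n x = φ x := by
      intro x
      obtain ⟨n₀, hn₀⟩ : ∃ n, x ∈ A n := by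
        have hx : x ∈ ⋃ n, A n := (iUnion_spanningSets μ) ▸ Set.mem_univ x
        exact Set.mem_iUnion.mp hx
      refine le_antisymm (iSup_le fun n => hψ_le n x) ?_
      by_cases htop : φ x = ⊤
      · rw [htop]
        have hk : ∀ k : ℕ, (k : ℝ≥0∞) ≤ ⨆ n, ψ n x := by
          intro k
          refine le_trans ?_ (le_iSup _ (max n₀ k))
          rw [show ψ (max n₀ k) x = min (φ x) (((max n₀ k : ℕ) : ℝ≥0∞)) from
            Set.indicator_of_mem (monotone_spanningSets μ (le_max_left _ _) hn₀) _,
            htop, min_eq_right le_top]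
          exact Nat.cast_le.mpr (le_max_right _ _)
        calc (⊤ : ℝ≥0∞) = ⨆ k : ℕ, (k : ℝ≥0∞) := ENNReal.iSup_natCast.symm
          _ ≤ ⨆ n, ψ n x := iSup_le hk
      · obtain ⟨k, hk⟩ := ENNReal.exists_nat_gt htop
        refine le_trans ?_ (le_iSup _ (max n₀ k))
        rw [show ψ (max n₀ k) x = min (φ x) (((max n₀ k : ℕ) : ℝ≥0∞)) from
          Set.indicator_of_mem (monotone_spanningSets μ (le_max_left _ _) hn₀) _,
          min_eq_left (hk.le.trans (Nat.cast_le.mpr (le_max_right n₀ k)))]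
    have hMC : ∫⁻ x, φ x ^ p ∂μ = ⨆ n, In n := by
      calc ∫⁻ x, φ x ^ p ∂μ = ∫⁻ x, ⨆ n, ψ n x ^ p ∂μ := by
            refine lintegral_congr fun x => ?_
            rw [← hsup x, iSup_rpow_seq _ hp0]
        _ = ⨆ n, In n := lintegral_iSup
            (fun n => ENNReal.continuous_rpow_const.measurable.comp (hψm n))
            (fun n m h x => ENNReal.rpow_le_rpow (hmono h x) hp0.le)
    calc (∫⁻ x, (∫⁻ y, F x y ∂ν) ^ p ∂μ) ^ (1 / p) = (⨆ n, In n) ^ (1 / p) := by rw [← hMC]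
      _ = ⨆ n, In n ^ (1 / p) := iSup_rpow_seq _ (by positivity)
      _ ≤ R := iSup_le keyn

variable {d : ℕ}

lemma map_affine (M : Matrix (Fin d) (Fin d) ℝ) (hM : M.det ≠ 0) (y : Fin d → ℝ) :
    Measure.map (fun x : Fin d → ℝ => M.mulVec (x - y)) volume
      = ENNReal.ofReal |M.det⁻¹| • volume := by
  have hlin : Measurable fun x : Fin d → ℝ => M.mulVec x := by
    have : (fun x : Fin d → ℝ => M.mulVec x) = ⇑(Matrix.toLin' M) := by
      funext v; rw [Matrix.toLin'_apply]
    rw [this]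
    exact (LinearMap.continuous_of_finiteDimensional _).measurable
  have hsub : Measurable fun x : Fin d → ℝ => x - y := measurable_id.sub measurable_const
  have hcomp : (fun x : Fin d → ℝ => M.mulVec (x - y))
      = (fun x : Fin d → ℝ => M.mulVec x) ∘ (fun x => x - y) := rfl
  rw [hcomp, ← Measure.map_map hlin hsub, (measurePreserving_sub_right volume y).map_eq]
  have : (fun x : Fin d → ℝ => M.mulVec x) = ⇑(Matrix.toLin' M) := by
    funext v; rw [Matrix.toLin'_apply]
  rw [this, Real.map_matrix_volume_pi_eq_smul_volume_pi hM]

lemma measurable_T (μ : (Fin d → ℝ) → Matrix (Fin d) (Fin d) ℝ)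
    (hμmeas : ∀ i j, Measurable fun y => μ y i j) :
    Measurable fun q : (Fin d → ℝ) × (Fin d → ℝ) => (μ q.1).mulVec (q.2 - q.1) := by
  apply measurable_pi_lambda
  intro i
  have he : (fun q : (Fin d → ℝ) × (Fin d → ℝ) => (μ q.1).mulVec (q.2 - q.1) i)
      = fun q => ∑ j, μ q.1 i j * (q.2 j - q.1 j) := by
    funext q
    simp [Matrix.mulVec, dotProduct]
  rw [he]
  exact Finset.measurable_sum _ fun j _ =>
    ((hμmeas i j).comp measurable_fst).mul
      (((measurable_pi_apply j).comp measurable_snd).sub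
        ((measurable_pi_apply j).comp measurable_fst))

lemma ae_ae_not_mem (μ : (Fin d → ℝ) → Matrix (Fin d) (Fin d) ℝ)
    (hμmeas : ∀ i j, Measurable fun y => μ y i j) (hμdet : ∀ y, (μ y).det ≠ 0)
    {S : Set (Fin d → ℝ)} (hS : MeasurableSet S) (hS0 : volume S = 0) :
    ∀ᵐ x : Fin d → ℝ, ∀ᵐ y : Fin d → ℝ, (μ y).mulVec (x - y) ∉ S := by
  have hjoint := measurable_T μ hμmeas
  set s : Set ((Fin d → ℝ) × (Fin d → ℝ)) := {q | (μ q.1).mulVec (q.2 - q.1) ∈ S} with hs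
  have hsm : MeasurableSet s := hjoint hS
  have hsec : ∀ y : Fin d → ℝ, volume (Prod.mk y ⁻¹' s) = 0 := by
    intro y
    have hTy : Measurable fun x : Fin d → ℝ => (μ y).mulVec (x - y) := by
      have : (fun x : Fin d → ℝ => (μ y).mulVec (x - y))
          = (fun q : (Fin d → ℝ) × (Fin d → ℝ) => (μ q.1).mulVec (q.2 - q.1))
            ∘ (fun x => (y, x)) := rfl
      rw [this]
      exact hjoint.comp measurable_prodMk_left
    have hpre : Prod.mk y ⁻¹' s = (fun x : Fin d → ℝ => (μ y).mulVec (x - y)) ⁻¹' S := rfl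
    rw [hpre, ← Measure.map_apply hTy hS, map_affine _ (hμdet y) y]
    simp [hS0]
  have hnull : (volume.prod volume) s = 0 := by
    rw [Measure.measure_prod_null hsm]
    exact Filter.Eventually.of_forall hsec
  have hswap : (volume.prod volume) (Prod.swap ⁻¹' s) = 0 := by
    have h1 : (volume.prod volume) (Prod.swap ⁻¹' s)
        = (Measure.map Prod.swap (volume.prod volume)) s :=
      (Measure.map_apply measurable_swap hsm).symm
    rw [h1, Measure.prod_swap]
    exact hnull
  rw [Measure.measure_prod_null (measurable_swap hsm)] at hswap
  refine hswap.mono fun x hx => ?_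
  have hx0 : volume (Prod.mk x ⁻¹' (Prod.swap ⁻¹' s)) = 0 := hx
  have := measure_eq_zero_iff_ae_notMem.mp hx0
  refine this.mono fun y hy => ?_
  exact hy

lemma eLpNorm_slice (p : ℝ≥0∞) {g : (Fin d → ℝ) → ℝ} (hg : Measurable g)
    (M : Matrix (Fin d) (Fin d) ℝ) (hM : M.det ≠ 0) (y : Fin d → ℝ) :
    eLpNorm (fun x => |M.det| ^ (1 / p).toReal * g (M.mulVec (x - y))) p volume
      = eLpNorm g p volume := by
  set t : ℝ := (1 / p).toReal with ht
  have ht0 : 0 ≤ t := ENNReal.toReal_nonneg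
  have hdet : 0 < |M.det| := abs_pos.mpr hM
  have hdinv : 0 < |M.det⁻¹| := abs_pos.mpr (inv_ne_zero hM)
  have hT : Measurable fun x : Fin d → ℝ => M.mulVec (x - y) := by
    have : (fun x : Fin d → ℝ => M.mulVec (x - y)) = ⇑(Matrix.toLin' M) ∘ (fun x => x - y) := by
      funext v; simp [Matrix.toLin'_apply]
    rw [this]
    exact (LinearMap.continuous_of_finiteDimensional _).measurable.comp
      (measurable_id.sub measurable_const)
  have h1 : (fun x : Fin d → ℝ => |M.det| ^ t * g (M.mulVec (x - y)))
      = (|M.det| ^ t) • (g ∘ fun x => M.mulVec (x - y)) := rfl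
  rw [h1, eLpNorm_const_smul]
  have h2 : eLpNorm (g ∘ fun x => M.mulVec (x - y)) p volume
      = eLpNorm g p (Measure.map (fun x : Fin d → ℝ => M.mulVec (x - y)) volume) :=
    (eLpNorm_map_measure hg.aestronglyMeasurable hT.aemeasurable).symm
  rw [h2, map_affine M hM y,
    eLpNorm_smul_measure_of_ne_zero (ENNReal.ofReal_pos.mpr hdinv).ne']
  rw [smul_eq_mul, ← mul_assoc]
  have hcancel : ‖|M.det| ^ t‖ₑ * (ENNReal.ofReal |M.det⁻¹|) ^ (1 / p).toReal = 1 := by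
    rw [Real.enorm_eq_ofReal (by positivity), abs_inv, ENNReal.ofReal_inv_of_pos hdet,
      ENNReal.inv_rpow, ← ht, ENNReal.ofReal_rpow_of_pos hdet]
    exact ENNReal.mul_inv_cancel (ENNReal.ofReal_pos.mpr (by positivity)).ne'
      ENNReal.ofReal_ne_top
  rw [hcancel, one_mul]

theorem young_meas (p : ℝ≥0∞) (hp : 1 ≤ p) (f g : (Fin d → ℝ) → ℝ)
    (hfm : Measurable f) (hgm : Measurable g) (hf : Integrable f) (hg : MemLp g p)
    (μ : (Fin d → ℝ) → Matrix (Fin d) (Fin d) ℝ)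
    (hμmeas : ∀ i j, Measurable fun y => μ y i j) (hμdet : ∀ y, (μ y).det ≠ 0) :
    MemLp (fun x => ∫ y, f y *
        (|(μ y).det| ^ (1 / p).toReal * g ((μ y).mulVec (x - y)))) p volume ∧
    eLpNorm (fun x => ∫ y, f y *
        (|(μ y).det| ^ (1 / p).toReal * g ((μ y).mulVec (x - y)))) p volume
      ≤ eLpNorm f 1 volume * eLpNorm g p volume := by
  have hp0 : p ≠ 0 := (zero_lt_one.trans_le hp).ne'
  set t : ℝ := (1 / p).toReal with htdef
  have ht0 : 0 ≤ t := ENNReal.toReal_nonneg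
  -- measurability of determinant weight
  have hdet_meas : Measurable fun y => (μ y).det := by
    have he : (fun y => (μ y).det)
        = fun y => ∑ σ : Equiv.Perm (Fin d),
            ((Equiv.Perm.sign σ : ℤ) : ℝ) * ∏ i, μ y (σ i) i := by
      funext y
      rw [Matrix.det_apply]
      refine Finset.sum_congr rfl fun σ _ => ?_
      rw [Units.smul_def, zsmul_eq_mul]
    rw [he]
    exact Finset.measurable_sum _ fun σ _ =>
      measurable_const.mul (Finset.measurable_prod _ fun i _ => hμmeas (σ i) i)
  have hc_meas : Measurable fun y => |(μ y).det| ^ t :=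
    (Real.continuous_rpow_const ht0).measurable.comp hdet_meas.abs
  -- joint measurability of the integrand
  set F : (Fin d → ℝ) → (Fin d → ℝ) → ℝ :=
    fun x y => f y * (|(μ y).det| ^ t * g ((μ y).mulVec (x - y))) with hFdef
  have hGm : Measurable fun q : (Fin d → ℝ) × (Fin d → ℝ) => g ((μ q.2).mulVec (q.1 - q.2)) :=
    hgm.comp ((measurable_T μ hμmeas).comp measurable_swap)
  have hFm : Measurable fun q : (Fin d → ℝ) × (Fin d → ℝ) => F q.1 q.2 :=
    (hfm.comp measurable_snd).mul ((hc_meas.comp measurable_snd).mul hGm)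
  have hAESM : AEStronglyMeasurable (fun x => ∫ y, F x y) (volume : Measure (Fin d → ℝ)) :=
    (hFm.stronglyMeasurable.integral_prod_right').aestronglyMeasurable
  -- the norm of each slice
  have slice : ∀ y, eLpNorm (fun x => F x y) p volume
      = ‖f y‖ₑ * eLpNorm g p volume := by
    intro y
    have h1 : (fun x => F x y)
        = (f y) • (fun x => |(μ y).det| ^ t * g ((μ y).mulVec (x - y))) := rfl
    rw [h1, eLpNorm_const_smul, eLpNorm_slice p hgm (μ y) (hμdet y) y]
  have hf1_top : eLpNorm f 1 volume ≠ ⊤ := (memLp_one_iff_integrable.mpr hf).2.ne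
  have hg_top : eLpNorm g p volume ≠ ⊤ := hg.2.ne
  -- the right-hand side as an integral of slice norms
  have hRHS : ∫⁻ y, eLpNorm (fun x => F x y) p volume
      = eLpNorm f 1 volume * eLpNorm g p volume := by
    simp_rw [slice]
    rw [lintegral_mul_const' _ _ hg_top, eLpNorm_one_eq_lintegral_enorm]
  have hbound : eLpNorm (fun x => ∫ y, F x y) p volume
      ≤ eLpNorm f 1 volume * eLpNorm g p volume := by
    rcases eq_or_ne p ⊤ with hptop | hptop
    · -- p = ∞
      subst hptop
      set c : ℝ≥0∞ := eLpNorm g ⊤ volume with hcdef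
      have hgae : ∀ᵐ z : Fin d → ℝ, (‖g z‖₊ : ℝ≥0∞) ≤ c := by
        rw [hcdef, eLpNorm_exponent_top]
        exact ae_le_eLpNormEssSup
      have hNm : MeasurableSet {z : Fin d → ℝ | ¬ (‖g z‖₊ : ℝ≥0∞) ≤ c} :=
        (measurableSet_le hgm.enorm measurable_const).compl
      have hN0 : volume {z : Fin d → ℝ | ¬ (‖g z‖₊ : ℝ≥0∞) ≤ c} = 0 := ae_iff.mp hgae
      have happ := ae_ae_not_mem μ hμmeas hμdet hNm hN0
      have ht1 : t = 0 := by simp [htdef]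
      have hcoef : ∀ y, |(μ y).det| ^ t = 1 := fun y => by rw [ht1, Real.rpow_zero]
      have hxbound : ∀ᵐ x : Fin d → ℝ,
          (‖∫ y, F x y‖₊ : ℝ≥0∞) ≤ eLpNorm f 1 volume * c := by
        refine happ.mono fun x hx => ?_
        calc (‖∫ y, F x y‖₊ : ℝ≥0∞) ≤ ∫⁻ y, (‖F x y‖₊ : ℝ≥0∞) :=
              enorm_integral_le_lintegral_enorm _
          _ ≤ ∫⁻ y, (‖f y‖₊ : ℝ≥0∞) * c := by
              refine lintegral_mono_ae (hx.mono fun y hy => ?_)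
              have hyle : (‖g ((μ y).mulVec (x - y))‖₊ : ℝ≥0∞) ≤ c := not_not.mp hy
              calc (‖F x y‖₊ : ℝ≥0∞)
                  = (‖f y‖₊ : ℝ≥0∞) * (‖g ((μ y).mulVec (x - y))‖₊ : ℝ≥0∞) := by
                    rw [hFdef]
                    simp only [hcoef y, one_mul, nnnorm_mul, ENNReal.coe_mul]
                _ ≤ (‖f y‖₊ : ℝ≥0∞) * c := mul_le_mul_right hyle _
          _ = eLpNorm f 1 volume * c := by
              rw [lintegral_mul_const' _ _ hg_top, eLpNorm_one_eq_lintegral_enorm]; rfl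
      rw [eLpNorm_exponent_top]
      exact essSup_le_of_ae_le _ hxbound
    · -- p finite
      set r : ℝ := p.toReal with hrdef
      have hr1 : 1 ≤ r := by
        rw [hrdef, ← ENNReal.toReal_one]
        exact ENNReal.toReal_mono hptop hp
      have hr0 : 0 < r := lt_of_lt_of_le one_pos hr1
      have hFen : Measurable (Function.uncurry fun x y => (‖F x y‖₊ : ℝ≥0∞)) := hFm.enorm
      calc eLpNorm (fun x => ∫ y, F x y) p volume
          = (∫⁻ x, (‖∫ y, F x y‖₊ : ℝ≥0∞) ^ r ∂volume) ^ (1 / r) :=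
            eLpNorm_eq_lintegral_rpow_enorm_toReal hp0 hptop
        _ ≤ (∫⁻ x, (∫⁻ y, (‖F x y‖₊ : ℝ≥0∞)) ^ r ∂volume) ^ (1 / r) :=
            ENNReal.rpow_le_rpow (lintegral_mono fun x =>
              ENNReal.rpow_le_rpow (enorm_integral_le_lintegral_enorm _) hr0.le)
              (by positivity)
        _ ≤ ∫⁻ y, (∫⁻ x, (‖F x y‖₊ : ℝ≥0∞) ^ r ∂volume) ^ (1 / r) :=
            lintegral_minkowski volume volume hr1 hFen
        _ = ∫⁻ y, eLpNorm (fun x => F x y) p volume :=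
            lintegral_congr fun y => (eLpNorm_eq_lintegral_rpow_enorm_toReal (f := fun x => F x y) hp0 hptop).symm
        _ = eLpNorm f 1 volume * eLpNorm g p volume := hRHS
  exact ⟨⟨hAESM, lt_of_le_of_lt hbound
    (ENNReal.mul_lt_top hf1_top.lt_top hg_top.lt_top)⟩, hbound⟩

end AdaptiveYoung

/-- **Young's inequality for μ-adaptive convolutions.**
For `f ∈ L¹(ℝᵈ)`, `g ∈ Lᵖ(ℝᵈ)` (`1 ≤ p ≤ ∞`) and a measurable field of
invertible matrices `μ : ℝᵈ → GL(d,ℝ)`, the μ-adaptive convolution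
`(f ∗ᵖ_μ g)(x) = ∫ f(y) |det μ(y)|^{1/p} g(μ(y)(x−y)) dy`
belongs to `Lᵖ` and `‖f ∗ᵖ_μ g‖_p ≤ ‖f‖₁ ‖g‖_p`.
(The convention `1/p = 0` for `p = ∞` is realized by `(1/p).toReal`.) -/
theorem adaptive_convolution_young {d : ℕ} (p : ℝ≥0∞) (hp : 1 ≤ p)
    (f g : (Fin d → ℝ) → ℝ) (hf : Integrable f) (hg : MemLp g p)
    (μ : (Fin d → ℝ) → Matrix (Fin d) (Fin d) ℝ)
    (hμmeas : ∀ i j, Measurable fun y => μ y i j) (hμinv : ∀ y, IsUnit (μ y)) :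
    MemLp (fun x => ∫ y, f y *
        (|(μ y).det| ^ (1 / p).toReal * g ((μ y).mulVec (x - y)))) p volume ∧
    eLpNorm (fun x => ∫ y, f y *
        (|(μ y).det| ^ (1 / p).toReal * g ((μ y).mulVec (x - y)))) p volume
      ≤ eLpNorm f 1 volume * eLpNorm g p volume := by
  have hμdet : ∀ y, (μ y).det ≠ 0 := fun y =>
    isUnit_iff_ne_zero.mp ((Matrix.isUnit_iff_isUnit_det _).mp (hμinv y))
  obtain ⟨f', hf'sm, hff'⟩ := hf.1
  obtain ⟨g', hg'sm, hgg'⟩ := hg.1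
  have hf' : Integrable f' := hf.congr hff'
  have hg' : MemLp g' p := hg.ae_eq hgg'
  obtain ⟨S, hSsub, hSm, hS0⟩ :=
    exists_measurable_superset_of_null (μ := (volume : Measure (Fin d → ℝ)))
      (s := {z | g z ≠ g' z}) (ae_iff.mp hgg')
  have hxy := AdaptiveYoung.ae_ae_not_mem μ hμmeas hμdet hSm hS0
  have hconv_eq : (fun x => ∫ y, f y *
        (|(μ y).det| ^ (1 / p).toReal * g ((μ y).mulVec (x - y))))
      =ᵐ[volume] (fun x => ∫ y, f' y *
        (|(μ y).det| ^ (1 / p).toReal * g' ((μ y).mulVec (x - y)))) := by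
    refine hxy.mono fun x hx => ?_
    refine integral_congr_ae ?_
    filter_upwards [hx, hff'] with y h1 h2
    have hgeq : g ((μ y).mulVec (x - y)) = g' ((μ y).mulVec (x - y)) := by
      by_contra hne
      exact h1 (hSsub hne)
    rw [h2, hgeq]
  have main := AdaptiveYoung.young_meas p hp f' g' hf'sm.measurable hg'sm.measurable hf' hg' μ hμmeas hμdet
  constructor
  · exact main.1.ae_eq hconv_eq.symm
  · rw [eLpNorm_congr_ae hconv_eq, eLpNorm_congr_ae hff', eLpNorm_congr_ae hgg']
    exact main.2
end

section
/- Let f ∈ L¹(ℝᵈ), let g ∈ L¹(ℝᵈ) be radially symmetric, i.e. g(x) = γ(‖x‖²) for some γ : ℝ_{≥0} → ℝ, let A ∈ GL(d,ℝ), and let μ, μ̃ : ℝᵈ → GL(d,ℝ) be measurable functions satisfying μ̃(x)ᵀ μ̃(x) = Aᵀ μ(Ax)ᵀ μ(Ax) A for all x ∈ ℝᵈ. Then for every x ∈ ℝᵈ, ((f(A·)) ∗_{μ̃} g)(x) = (f ∗_μ g)(Ax); that is, the adaptive convolution of the linearly rescaled function is the rescaling of the adaptive convolution. -/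
open MeasureTheory Matrix
open scoped ENNReal

/-- Change of variables by an invertible matrix, unconditional version. -/
lemma integral_comp_mulVec_aux {d : ℕ} (A : Matrix (Fin d) (Fin d) ℝ) (hA : IsUnit A)
    (h : (Fin d → ℝ) → ℝ) :
    (∫ y, h y) = |A.det| * ∫ z, h (A.mulVec z) := by
  have hinv : Invertible A := hA.invertible
  have hdet : A.det ≠ 0 := by
    simpa [isUnit_iff_ne_zero] using (A.isUnit_iff_isUnit_det.mp hA)
  let e : (Fin d → ℝ) ≃ᵐ (Fin d → ℝ) :=
    ((A.toLinearEquiv' hinv).toContinuousLinearEquiv).toHomeomorph.toMeasurableEquiv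
  have he : ∀ z, e z = A.mulVec z := fun z => rfl
  have hmap : Measure.map e volume = ENNReal.ofReal |A.det|⁻¹ • volume := by
    have : Measure.map (Matrix.toLin' A) volume
        = ENNReal.ofReal (abs (A.det)⁻¹) • volume :=
      Real.map_matrix_volume_pi_eq_smul_volume_pi hdet
    rw [show (e : (Fin d → ℝ) → (Fin d → ℝ)) = ⇑(Matrix.toLin' A) from funext fun z => rfl]
    simpa [abs_inv] using this
  calc (∫ y, h y)
      = |A.det| * ∫ y, h y ∂(ENNReal.ofReal |A.det|⁻¹ • volume) := by
        rw [integral_smul_measure]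
        rw [ENNReal.toReal_ofReal (by positivity)]
        rw [smul_eq_mul, ← mul_assoc, mul_inv_cancel₀ (abs_ne_zero.mpr hdet), one_mul]
    _ = |A.det| * ∫ y, h y ∂(Measure.map e volume) := by rw [hmap]
    _ = |A.det| * ∫ z, h (A.mulVec z) := by rw [MeasureTheory.integral_map_equiv e h]; simp only [he]

/-- **Scale invariance of μ-adaptive convolutions for radial kernels.**
Let `g(x) = γ(‖x‖²)` be radially symmetric (Euclidean norm) and suppose the
adaptation functions `μ, μ̃` satisfy `μ̃(x)ᵀ μ̃(x) = Aᵀ μ(Ax)ᵀ μ(Ax) A`.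
Then `((f(A·)) ∗_{μ̃} g)(x) = (f ∗_μ g)(Ax)`. -/
theorem adaptive_convolution_scaling {d : ℕ}
    (f g : (Fin d → ℝ) → ℝ) (hf : Integrable f) (hg : Integrable g)
    (γ : ℝ → ℝ) (hrad : ∀ x : Fin d → ℝ, g x = γ (∑ i, (x i) ^ 2))
    (A : Matrix (Fin d) (Fin d) ℝ) (hA : IsUnit A)
    (μ μt : (Fin d → ℝ) → Matrix (Fin d) (Fin d) ℝ)
    (hμmeas : ∀ i j, Measurable fun y => μ y i j)
    (hμtmeas : ∀ i j, Measurable fun y => μt y i j)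
    (hμinv : ∀ y, IsUnit (μ y)) (hμtinv : ∀ y, IsUnit (μt y))
    (hrel : ∀ x, (μt x)ᵀ * μt x = Aᵀ * (μ (A.mulVec x))ᵀ * μ (A.mulVec x) * A)
    (x : Fin d → ℝ) :
    (∫ y, f (A.mulVec y) * (|(μt y).det| * g ((μt y).mulVec (x - y))))
      = ∫ y, f y * (|(μ y).det| * g ((μ y).mulVec (A.mulVec x - y))) := by
  rw [integral_comp_mulVec_aux A hA
    (fun y => f y * (|(μ y).det| * g ((μ y).mulVec (A.mulVec x - y)))),
    ← integral_const_mul]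
  congr 1
  ext z
  -- determinant relation
  have hdet : |(μt z).det| = |A.det| * |(μ (A.mulVec z)).det| := by
    have h := congrArg Matrix.det (hrel z)
    simp only [Matrix.det_mul, Matrix.det_transpose] at h
    rw [← abs_mul, ← sq_eq_sq_iff_abs_eq_abs]
    ring_nf
    ring_nf at h
    linarith
  -- norm relation
  have hnorm : ∀ v : Fin d → ℝ,
      (∑ i, ((μt z).mulVec v i) ^ 2)
        = ∑ i, ((μ (A.mulVec z)).mulVec (A.mulVec v) i) ^ 2 := by
    intro v
    have key : ∀ (M : Matrix (Fin d) (Fin d) ℝ) (w : Fin d → ℝ),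
        (∑ i, (M.mulVec w i) ^ 2) = w ⬝ᵥ (Mᵀ * M).mulVec w := by
      intro M w
      rw [← Matrix.mulVec_mulVec, Matrix.dotProduct_mulVec, Matrix.vecMul_transpose]
      simp [dotProduct, sq]
    rw [key, key, hrel z]
    have hassoc : Aᵀ * (μ (A.mulVec z))ᵀ * μ (A.mulVec z) * A
        = Aᵀ * ((μ (A.mulVec z))ᵀ * μ (A.mulVec z)) * A := by
      noncomm_ring
    rw [hassoc]
    simp only [← Matrix.mulVec_mulVec]
    rw [Matrix.dotProduct_mulVec, Matrix.vecMul_transpose]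
  have hg' : g ((μt z).mulVec (x - z))
      = g ((μ (A.mulVec z)).mulVec (A.mulVec x - A.mulVec z)) := by
    rw [hrad, hrad, ← Matrix.mulVec_sub, hnorm (x - z)]
  rw [hdet, hg']
  ring
end

section
/- Let f = G[a,Σ] be the Gaussian density with mean a ∈ ℝᵈ and symmetric positive definite covariance Σ ∈ GL(d,ℝ). Then: (1) ∇f(x) ∇f(x)ᵀ − f(x)·D²f(x) = f(x)² · Σ^{−1} for all x ∈ ℝᵈ; (2) consequently the Wigner-based adaptation function is constant, μ_f^{(e)}(x) = ½ Σ^{−1/2} for all x, i.e. (μ_f^{(e)})²(x) = ¼ Σ^{−1}; (3) moreover, for any 0 < λ < √2, the constant function μ(x) ≡ (2−λ²)^{−1/2} Σ^{−1/2} solves the implicit equation μ²(x) = λ²μ²(x)/2 + [((∇f ∇fᵀ − f·D²f) ∗ G_{(λμ)^{−2}(x)}²)(x)] / [2 (f² ∗ G_{(λμ)^{−2}(x)}²)(x)]. -/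
open MeasureTheory Matrix
open scoped ENNReal

/-- The Gaussian density `G[a,Σ](x) = (2π)^{−d/2}|det Σ|^{−1/2} exp(−½ (x−a)ᵀΣ⁻¹(x−a))`. -/
noncomputable def gaussianGM {d : ℕ} (a : Fin d → ℝ) (S : Matrix (Fin d) (Fin d) ℝ)
    (x : Fin d → ℝ) : ℝ :=
  ((2 * Real.pi) ^ (-(d : ℝ) / 2) : ℝ) * |S.det| ^ (-(1 : ℝ) / 2) *
    Real.exp (-(1 / 2) * ((x - a) ⬝ᵥ S⁻¹.mulVec (x - a)))

variable {d : ℕ}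

noncomputable def dotCLM (u : Fin d → ℝ) : (Fin d → ℝ) →L[ℝ] ℝ :=
  ∑ i, u i • (ContinuousLinearMap.proj i : (Fin d → ℝ) →L[ℝ] ℝ)

lemma dotCLM_apply (u v : Fin d → ℝ) : dotCLM u v = u ⬝ᵥ v := by
  simp [dotCLM, dotProduct]

lemma dotCLM_single (u : Fin d → ℝ) (i : Fin d) : dotCLM u (Pi.single i 1) = u i := by
  rw [dotCLM_apply]
  simp [dotProduct, Pi.single_apply, mul_ite]

lemma hasFDerivAt_quad (Q : Matrix (Fin d) (Fin d) ℝ) (hQ : Qᵀ = Q) (a x : Fin d → ℝ) :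
    HasFDerivAt (fun x => (x - a) ⬝ᵥ Q.mulVec (x - a)) ((2:ℝ) • dotCLM (Q.mulVec (x - a))) x := by
  have h : ∀ i : Fin d, HasFDerivAt (fun x : Fin d → ℝ => (x i - a i) * (Q.mulVec (x - a)) i)
      (((x i - a i) • dotCLM (fun j => Q i j))
        + ((Q.mulVec (x - a)) i • (ContinuousLinearMap.proj i : (Fin d → ℝ) →L[ℝ] ℝ))) x := by
    intro i
    have h1 : HasFDerivAt (fun x : Fin d → ℝ => x i - a i)
        (ContinuousLinearMap.proj i : (Fin d → ℝ) →L[ℝ] ℝ) x :=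
      ((ContinuousLinearMap.proj i : (Fin d → ℝ) →L[ℝ] ℝ).hasFDerivAt).sub_const (a i)
    have h2 : HasFDerivAt (fun x : Fin d → ℝ => (Q.mulVec (x - a)) i)
        (dotCLM (fun j => Q i j)) x := by
      have : (fun x : Fin d → ℝ => (Q.mulVec (x - a)) i)
          = fun x : Fin d → ℝ => ∑ j, Q i j * (x j - a j) := by
        funext x; simp [Matrix.mulVec, dotProduct]
      rw [this]
      have : HasFDerivAt (fun x : Fin d → ℝ => ∑ j, Q i j * (x j - a j))
          (∑ j, Q i j • (ContinuousLinearMap.proj j : (Fin d → ℝ) →L[ℝ] ℝ)) x := by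
        apply HasFDerivAt.fun_sum
        intro j _
        exact (((ContinuousLinearMap.proj j : (Fin d → ℝ) →L[ℝ] ℝ).hasFDerivAt).sub_const
          (a j)).const_mul (Q i j)
      exact this
    simpa using h1.fun_mul h2
  have hsum := HasFDerivAt.fun_sum (fun i (_ : i ∈ Finset.univ) => h i)
  have heq : (fun x : Fin d → ℝ => (x - a) ⬝ᵥ Q.mulVec (x - a))
      = fun x : Fin d → ℝ => ∑ i, (x i - a i) * (Q.mulVec (x - a)) i := by
    funext x; simp [dotProduct]
  rw [heq]
  refine hsum.congr_fderiv ?_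
  ext v
  simp only [ContinuousLinearMap.sum_apply, ContinuousLinearMap.add_apply,
    ContinuousLinearMap.smul_apply, ContinuousLinearMap.proj_apply, ContinuousLinearMap.coe_smul',
    Pi.smul_apply, dotCLM_apply, smul_eq_mul]
  rw [Finset.sum_add_distrib]
  have e1 : ∑ i, Q.mulVec (x - a) i * v i = Q.mulVec (x - a) ⬝ᵥ v := rfl
  have e2 : ∑ i, (x i - a i) * ((fun j => Q i j) ⬝ᵥ v) = Q.mulVec (x - a) ⬝ᵥ v := by
    simp only [dotProduct, Finset.mul_sum, Matrix.mulVec]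
    rw [Finset.sum_comm]
    apply Finset.sum_congr rfl
    intro j _
    rw [Finset.sum_mul]
    apply Finset.sum_congr rfl
    intro i _
    have hq : Q j i = Q i j := by conv_lhs => rw [← hQ, Matrix.transpose_apply]
    simp only [Pi.sub_apply]
    rw [hq]; ring
  rw [e1, e2]
  ring

lemma hasFDerivAt_gaussianGM (a : Fin d → ℝ) (S : Matrix (Fin d) (Fin d) ℝ)
    (hQ : (S⁻¹)ᵀ = S⁻¹) (x : Fin d → ℝ) :
    HasFDerivAt (gaussianGM a S)
      ((-(gaussianGM a S x)) • dotCLM (S⁻¹.mulVec (x - a))) x := by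
  set C : ℝ := ((2 * Real.pi) ^ (-(d : ℝ) / 2) : ℝ) * |S.det| ^ (-(1 : ℝ) / 2) with hC
  have hq := hasFDerivAt_quad S⁻¹ hQ a x
  have h1 : HasFDerivAt (fun x : Fin d → ℝ => -(1/2 : ℝ) * ((x - a) ⬝ᵥ S⁻¹.mulVec (x - a)))
      ((-(1/2 : ℝ)) • ((2:ℝ) • dotCLM (S⁻¹.mulVec (x - a)))) x := hq.const_mul _
  have h2 := h1.exp
  have h3 := h2.const_mul C
  have : gaussianGM a S = fun x : Fin d → ℝ =>
      C * Real.exp (-(1/2 : ℝ) * ((x - a) ⬝ᵥ S⁻¹.mulVec (x - a))) := rfl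
  rw [this]
  refine h3.congr_fderiv ?_
  ext v
  simp only [ContinuousLinearMap.smul_apply, smul_eq_mul, gaussianGM, ← hC]
  ring

lemma fderiv_gaussianGM (a : Fin d → ℝ) (S : Matrix (Fin d) (Fin d) ℝ)
    (hQ : (S⁻¹)ᵀ = S⁻¹) (x : Fin d → ℝ) (i : Fin d) :
    fderiv ℝ (gaussianGM a S) x (Pi.single i 1)
      = -(gaussianGM a S x) * (S⁻¹.mulVec (x - a)) i := by
  rw [(hasFDerivAt_gaussianGM a S hQ x).fderiv]
  simp [dotCLM_single]

lemma varMat_gaussianGM (a : Fin d → ℝ) (S : Matrix (Fin d) (Fin d) ℝ)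
    (hQ : (S⁻¹)ᵀ = S⁻¹) (x : Fin d → ℝ) :
    (Matrix.of fun i j =>
      fderiv ℝ (gaussianGM a S) x (Pi.single i 1) * fderiv ℝ (gaussianGM a S) x (Pi.single j 1)
      - gaussianGM a S x * fderiv ℝ (fun w => fderiv ℝ (gaussianGM a S) w (Pi.single j 1)) x
          (Pi.single i 1))
      = (gaussianGM a S x) ^ 2 • S⁻¹ := by
  set f := gaussianGM a S with hf
  set u := S⁻¹.mulVec (x - a) with hu
  ext i j
  have key : ∀ j : Fin d, fderiv ℝ (fun w => fderiv ℝ f w (Pi.single j 1)) x (Pi.single i 1)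
      = f x * u i * u j - f x * S⁻¹ j i := by
    intro j
    have hrw : (fun w => fderiv ℝ f w (Pi.single j 1))
        = fun w => (-(f w)) * (S⁻¹.mulVec (w - a)) j := by
      funext w
      rw [fderiv_gaussianGM a S hQ w j]
    rw [hrw]
    have hg : HasFDerivAt (fun w : Fin d → ℝ => (S⁻¹.mulVec (w - a)) j)
        (dotCLM (fun k => S⁻¹ j k)) x := by
      have hrw2 : (fun w : Fin d → ℝ => (S⁻¹.mulVec (w - a)) j)
          = fun w : Fin d → ℝ => ∑ k, S⁻¹ j k * (w k - a k) := by
        funext w; simp [Matrix.mulVec, dotProduct]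
      rw [hrw2]
      have : HasFDerivAt (fun w : Fin d → ℝ => ∑ k, S⁻¹ j k * (w k - a k))
          (∑ k, S⁻¹ j k • (ContinuousLinearMap.proj k : (Fin d → ℝ) →L[ℝ] ℝ)) x := by
        apply HasFDerivAt.fun_sum
        intro k _
        exact (((ContinuousLinearMap.proj k : (Fin d → ℝ) →L[ℝ] ℝ).hasFDerivAt).sub_const
          (a k)).const_mul (S⁻¹ j k)
      exact this
    have hmf : HasFDerivAt (fun w => -(f w)) ((f x) • dotCLM u) x := by
      have := (hasFDerivAt_gaussianGM a S hQ x).neg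
      refine this.congr_fderiv ?_
      ext v
      simp only [ContinuousLinearMap.smul_apply, ContinuousLinearMap.neg_apply, smul_eq_mul]
      ring
    have hprod := hmf.fun_mul hg
    rw [hprod.fderiv]
    simp only [ContinuousLinearMap.add_apply, ContinuousLinearMap.smul_apply, smul_eq_mul,
      dotCLM_single]
    ring
  rw [Matrix.of_apply, key j, fderiv_gaussianGM a S hQ x i, fderiv_gaussianGM a S hQ x j]
  have hsij : S⁻¹ j i = S⁻¹ i j := by conv_lhs => rw [← hQ, Matrix.transpose_apply]
  simp only [Matrix.smul_apply, smul_eq_mul, hsij]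
  ring

lemma continuous_gaussianGM (a : Fin d → ℝ) (S : Matrix (Fin d) (Fin d) ℝ) :
    Continuous (gaussianGM a S) := by
  apply Continuous.mul continuous_const
  apply Real.continuous_exp.comp
  apply Continuous.mul continuous_const
  simp only [dotProduct, Matrix.mulVec, Pi.sub_apply]
  exact continuous_finset_sum _ fun i _ =>
    (((continuous_apply i).sub continuous_const).mul
      (continuous_finset_sum _ fun j _ =>
        continuous_const.mul ((continuous_apply j).sub continuous_const)))

lemma gaussianGM_pos (a : Fin d → ℝ) (S : Matrix (Fin d) (Fin d) ℝ) (hdet : S.det ≠ 0)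
    (x : Fin d → ℝ) : 0 < gaussianGM a S x := by
  apply mul_pos (mul_pos _ _) (Real.exp_pos _)
  · exact Real.rpow_pos_of_pos (by positivity) _
  · exact Real.rpow_pos_of_pos (abs_pos.mpr hdet) _

lemma quad_nonneg {Q : Matrix (Fin d) (Fin d) ℝ} (hQ : Q.PosDef) (v : Fin d → ℝ) :
    0 ≤ v ⬝ᵥ Q.mulVec v := by
  rcases eq_or_ne v 0 with h | h
  · simp [h]
  · have := hQ.dotProduct_mulVec_pos h
    simpa using this.le

lemma gaussianGM_le (a : Fin d → ℝ) (S : Matrix (Fin d) (Fin d) ℝ) (hS : S.PosDef)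
    (x : Fin d → ℝ) :
    gaussianGM a S x ≤ ((2 * Real.pi) ^ (-(d : ℝ) / 2) : ℝ) * |S.det| ^ (-(1 : ℝ) / 2) := by
  have h1 : Real.exp (-(1 / 2) * ((x - a) ⬝ᵥ S⁻¹.mulVec (x - a))) ≤ 1 := by
    rw [Real.exp_le_one_iff]
    have := quad_nonneg hS.inv (x - a)
    nlinarith
  have h2 : (0:ℝ) ≤ ((2 * Real.pi) ^ (-(d : ℝ) / 2) : ℝ) * |S.det| ^ (-(1 : ℝ) / 2) := by
    apply mul_nonneg (Real.rpow_nonneg (by positivity) _) (Real.rpow_nonneg (abs_nonneg _) _)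
  calc gaussianGM a S x ≤ ((2 * Real.pi) ^ (-(d : ℝ) / 2) : ℝ) * |S.det| ^ (-(1 : ℝ) / 2) * 1 :=
        mul_le_mul_of_nonneg_left h1 h2
    _ = _ := mul_one _

lemma exists_quad_lower {Q : Matrix (Fin d) (Fin d) ℝ} (hQ : Q.PosDef) :
    ∃ ε > (0:ℝ), ∀ v : Fin d → ℝ, ε * ∑ i, v i ^ 2 ≤ v ⬝ᵥ Q.mulVec v := by
  rcases Nat.eq_zero_or_pos d with hd | hd
  · refine ⟨1, one_pos, fun v => ?_⟩
    subst hd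
    simp [dotProduct]
  · set K : Set (Fin d → ℝ) := {v | ∑ i, v i ^ 2 = 1} with hK
    have hKc : IsCompact K := by
      apply (isCompact_closedBall (0 : Fin d → ℝ) 1).of_isClosed_subset
      · exact isClosed_eq (continuous_finset_sum _ fun i _ => (continuous_apply i).pow 2)
          continuous_const
      · intro v hv
        simp only [Metric.mem_closedBall, dist_zero_right]
        rw [pi_norm_le_iff_of_nonneg (by norm_num)]
        intro i
        have h1 : v i ^ 2 ≤ 1 := by
          rw [← hv]
          exact Finset.single_le_sum (f := fun i => v i ^ 2) (fun j _ => sq_nonneg _)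
            (Finset.mem_univ i)
        rw [Real.norm_eq_abs, ← Real.sqrt_one, ← Real.sqrt_sq_eq_abs]
        exact Real.sqrt_le_sqrt h1
    have hKne : K.Nonempty := by
      refine ⟨Pi.single ⟨0, hd⟩ 1, ?_⟩
      simp [hK, Pi.single_apply, Finset.sum_ite_eq']
    have hcont : ContinuousOn (fun v : Fin d → ℝ => v ⬝ᵥ Q.mulVec v) K := by
      apply Continuous.continuousOn
      simp only [dotProduct, Matrix.mulVec]
      exact continuous_finset_sum _ fun i _ =>
        ((continuous_apply i).mul (continuous_finset_sum _ fun j _ =>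
          continuous_const.mul (continuous_apply j)))
    obtain ⟨v₀, hv₀K, hv₀min⟩ := hKc.exists_isMinOn hKne hcont
    have hv₀ne : v₀ ≠ 0 := by
      intro h
      rw [h] at hv₀K
      simp [hK] at hv₀K
    refine ⟨v₀ ⬝ᵥ Q.mulVec v₀, by simpa using hQ.dotProduct_mulVec_pos hv₀ne, fun v => ?_⟩
    rcases eq_or_ne v 0 with h | h
    · simp [h, quad_nonneg hQ]
    · set t : ℝ := Real.sqrt (∑ i, v i ^ 2) with ht
      have htpos : 0 < t := by
        apply Real.sqrt_pos.mpr
        rcases Function.ne_iff.mp h with ⟨i, hi⟩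
        have : 0 < v i ^ 2 := by
          have := sq_nonneg (v i)
          rcases this.lt_or_eq with h' | h'
          · exact h'
          · exact absurd (pow_eq_zero_iff (by norm_num) |>.mp h'.symm) hi
        exact lt_of_lt_of_le this (Finset.single_le_sum (f := fun i => v i ^ 2)
          (fun j _ => sq_nonneg _) (Finset.mem_univ i))
      have ht2 : t ^ 2 = ∑ i, v i ^ 2 := Real.sq_sqrt (by positivity)
      have hw : (t⁻¹ • v) ∈ K := by
        simp only [hK, Set.mem_setOf_eq, Pi.smul_apply, smul_eq_mul, mul_pow]
        rw [← Finset.mul_sum, ← ht2]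
        field_simp
      have hmin := hv₀min hw
      have hscale : (t⁻¹ • v) ⬝ᵥ Q.mulVec (t⁻¹ • v) = t⁻¹ ^ 2 * (v ⬝ᵥ Q.mulVec v) := by
        rw [Matrix.mulVec_smul, dotProduct_smul, smul_dotProduct]
        simp [smul_eq_mul]; ring
      simp only [Set.mem_setOf_eq] at hmin
      rw [hscale] at hmin
      have := mul_le_mul_of_nonneg_left hmin (sq_nonneg t)
      rw [← mul_assoc] at this
      have ht' : t ^ 2 * t⁻¹ ^ 2 = 1 := by field_simp
      rw [ht'] at this
      rw [one_mul] at this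
      calc (v₀ ⬝ᵥ Q.mulVec v₀) * ∑ i, v i ^ 2 = t ^ 2 * (v₀ ⬝ᵥ Q.mulVec v₀) := by rw [ht2]; ring
        _ ≤ v ⬝ᵥ Q.mulVec v := this

lemma gaussianGM_nonneg (a : Fin d → ℝ) (S : Matrix (Fin d) (Fin d) ℝ) (x : Fin d → ℝ) :
    0 ≤ gaussianGM a S x := by
  apply mul_nonneg (mul_nonneg _ _) (Real.exp_pos _).le
  · exact Real.rpow_nonneg (by positivity) _
  · exact Real.rpow_nonneg (abs_nonneg _) _

lemma gaussianGM_sq (a : Fin d → ℝ) (S : Matrix (Fin d) (Fin d) ℝ) (x : Fin d → ℝ) :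
    gaussianGM a S x ^ 2 = (((2 * Real.pi) ^ (-(d : ℝ) / 2) : ℝ) * |S.det| ^ (-(1 : ℝ) / 2)) ^ 2
      * Real.exp (-((x - a) ⬝ᵥ S⁻¹.mulVec (x - a))) := by
  rw [gaussianGM, mul_pow, ← Real.exp_nat_mul]
  congr 1
  push_cast
  ring

lemma integrable_gaussianGM_prod (a b c : Fin d → ℝ) (S T : Matrix (Fin d) (Fin d) ℝ)
    (hS : S.PosDef) (hT : T.PosDef) :
    Integrable (fun y => gaussianGM a S y ^ 2 * gaussianGM b T (c - y) ^ 2) := by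
  obtain ⟨ε, hε, hlow⟩ := exists_quad_lower hS.inv
  set CS : ℝ := ((2 * Real.pi) ^ (-(d : ℝ) / 2) : ℝ) * |S.det| ^ (-(1 : ℝ) / 2) with hCS
  set CT : ℝ := ((2 * Real.pi) ^ (-(d : ℝ) / 2) : ℝ) * |T.det| ^ (-(1 : ℝ) / 2) with hCT
  have hCSnn : 0 ≤ CS := mul_nonneg (Real.rpow_nonneg (by positivity) _)
    (Real.rpow_nonneg (abs_nonneg _) _)
  have hCTnn : 0 ≤ CT := mul_nonneg (Real.rpow_nonneg (by positivity) _)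
    (Real.rpow_nonneg (abs_nonneg _) _)
  have hgbound : Integrable (fun y : Fin d → ℝ =>
      (CS ^ 2 * CT ^ 2) * ∏ i, Real.exp (-ε * (y i - a i) ^ 2)) := by
    apply Integrable.const_mul
    apply Integrable.fintype_prod (f := fun i (t : ℝ) => Real.exp (-ε * (t - a i) ^ 2))
    intro i
    exact (integrable_exp_neg_mul_sq hε).comp_sub_right (a i)
  apply hgbound.mono'
  · apply Continuous.aestronglyMeasurable
    exact ((continuous_gaussianGM a S).pow 2).mul
      (((continuous_gaussianGM b T).comp (continuous_const.sub continuous_id)).pow 2)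
  · apply Filter.Eventually.of_forall
    intro y
    have h1 : gaussianGM b T (c - y) ^ 2 ≤ CT ^ 2 := by
      apply pow_le_pow_left₀ (gaussianGM_nonneg _ _ _) (gaussianGM_le b T hT _)
    have h2 : gaussianGM a S y ^ 2 ≤ CS ^ 2 * ∏ i, Real.exp (-ε * (y i - a i) ^ 2) := by
      rw [gaussianGM_sq, ← Real.exp_sum]
      apply mul_le_mul_of_nonneg_left _ (sq_nonneg CS)
      apply Real.exp_le_exp.mpr
      have := hlow (y - a)
      simp only [Pi.sub_apply] at this ⊢
      have hsum : ∑ i, -ε * (y i - a i) ^ 2 = -(ε * ∑ i, (y i - a i) ^ 2) := by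
        rw [← Finset.mul_sum]; ring
      rw [hsum]
      linarith
    rw [Real.norm_eq_abs, abs_of_nonneg (mul_nonneg (sq_nonneg _) (sq_nonneg _))]
    calc gaussianGM a S y ^ 2 * gaussianGM b T (c - y) ^ 2
        ≤ (CS ^ 2 * ∏ i, Real.exp (-ε * (y i - a i) ^ 2)) * CT ^ 2 :=
          mul_le_mul h2 h1 (sq_nonneg _) (by positivity)
      _ = CS ^ 2 * CT ^ 2 * ∏ i, Real.exp (-ε * (y i - a i) ^ 2) := by ring

lemma integral_gaussianGM_prod_pos (a b c : Fin d → ℝ) (S T : Matrix (Fin d) (Fin d) ℝ)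
    (hS : S.PosDef) (hT : T.PosDef) :
    0 < ∫ y, gaussianGM a S y ^ 2 * gaussianGM b T (c - y) ^ 2 := by
  rw [integral_pos_iff_support_of_nonneg]
  · have : Function.support (fun y => gaussianGM a S y ^ 2 * gaussianGM b T (c - y) ^ 2)
        = Set.univ := by
      apply Set.eq_univ_of_forall
      intro y
      simp only [Function.mem_support]
      have h1 := gaussianGM_pos a S (ne_of_gt hS.det_pos) y
      have h2 := gaussianGM_pos b T (ne_of_gt hT.det_pos) (c - y)
      positivity
    rw [this]
    exact (isOpen_univ.measure_pos volume ⟨0, trivial⟩)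
  · intro y
    exact mul_nonneg (sq_nonneg _) (sq_nonneg _)
  · exact integrable_gaussianGM_prod a b c S T hS hT

/-- The matrix-valued function `∇f ∇fᵀ − f·D²f`. -/
noncomputable def varMat {d : ℕ} (f : (Fin d → ℝ) → ℝ) (z : Fin d → ℝ) :
    Matrix (Fin d) (Fin d) ℝ :=
  Matrix.of fun i j =>
    fderiv ℝ f z (Pi.single i 1) * fderiv ℝ f z (Pi.single j 1)
      - f z * fderiv ℝ (fun w => fderiv ℝ f w (Pi.single j 1)) z (Pi.single i 1)

/-- The square `C_f(x) = ((f²) ∗ (∇f∇fᵀ − f D²f))(2x) / (4 ((f²) ∗ (f²))(2x))`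
of the Wigner-based adaptation function `μ_f^{(e)}`. -/
noncomputable def Cmat {d : ℕ} (f : (Fin d → ℝ) → ℝ) (x : Fin d → ℝ) :
    Matrix (Fin d) (Fin d) ℝ :=
  (4 * ∫ y, (f y) ^ 2 * (f ((2 : ℝ) • x - y)) ^ 2)⁻¹ •
    Matrix.of fun i j => ∫ y, (f y) ^ 2 * varMat f ((2 : ℝ) • x - y) i j

/-- **Calibration on Gaussian densities.** Let `f = G[a,Σ]` with `Σ` symmetric
positive definite. Then (1) `∇f∇fᵀ − f D²f = f² Σ⁻¹`; (2) the square of the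
Wigner-based adaptation function is constant, `(μ_f^{(e)})²(x) = ¼ Σ⁻¹`
(i.e. `μ_f^{(e)} ≡ ½ Σ^{−1/2}`); and (3) for `0 < λ < √2`, the constant matrix
`M = (2−λ²)⁻¹ Σ⁻¹` (the square of `μ ≡ (2−λ²)^{−1/2} Σ^{−1/2}`) solves the
implicit fixed-point equation
`μ² = λ²μ²/2 + ((∇f∇fᵀ − f D²f) ∗ G²_{(λμ)^{-2}})(x) / (2 (f² ∗ G²_{(λμ)^{-2}})(x))`,
where `(λμ)^{−2} = λ⁻²(2−λ²) Σ` is the covariance of the Gaussian window. -/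
theorem gaussian_adaptation_calibration {d : ℕ} (a : Fin d → ℝ)
    (S : Matrix (Fin d) (Fin d) ℝ) (hS : S.PosDef) (hSsymm : Sᵀ = S) :
    (∀ x : Fin d → ℝ, varMat (gaussianGM a S) x = (gaussianGM a S x) ^ 2 • S⁻¹) ∧
    (∀ x : Fin d → ℝ, Cmat (gaussianGM a S) x = (4 : ℝ)⁻¹ • S⁻¹) ∧
    (∀ lam : ℝ, 0 < lam → lam < Real.sqrt 2 →
      ∀ x : Fin d → ℝ,
        ((2 - lam ^ 2)⁻¹ • S⁻¹ : Matrix (Fin d) (Fin d) ℝ)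
          = (lam ^ 2 / 2) • ((2 - lam ^ 2)⁻¹ • S⁻¹)
            + (2 * ∫ y, (gaussianGM a S y) ^ 2 *
                  (gaussianGM 0 ((lam⁻¹ ^ 2 * (2 - lam ^ 2)) • S) (x - y)) ^ 2)⁻¹ •
              Matrix.of fun i j =>
                ∫ y, varMat (gaussianGM a S) y i j *
                  (gaussianGM 0 ((lam⁻¹ ^ 2 * (2 - lam ^ 2)) • S) (x - y)) ^ 2) := by
  have hQsymm : (S⁻¹)ᵀ = S⁻¹ := by rw [Matrix.transpose_nonsing_inv, hSsymm]
  set f := gaussianGM a S with hf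
  have part1 : ∀ x : Fin d → ℝ, varMat f x = (f x) ^ 2 • S⁻¹ := by
    intro x
    unfold varMat
    exact varMat_gaussianGM a S hQsymm x
  refine ⟨part1, ?_, ?_⟩
  · intro x
    set I : ℝ := ∫ y, f y ^ 2 * f ((2:ℝ) • x - y) ^ 2 with hI
    have hIpos : 0 < I := integral_gaussianGM_prod_pos a a ((2:ℝ) • x) S S hS hS
    have hentry : (Matrix.of fun i j => ∫ y, f y ^ 2 * varMat f ((2:ℝ) • x - y) i j)
        = I • S⁻¹ := by
      ext i j
      have hpt : ∀ y : Fin d → ℝ, f y ^ 2 * varMat f ((2:ℝ) • x - y) i j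
          = (f y ^ 2 * f ((2:ℝ) • x - y) ^ 2) * S⁻¹ i j := by
        intro y
        rw [part1]
        simp only [Matrix.smul_apply, smul_eq_mul]
        ring
      simp only [Matrix.of_apply, Matrix.smul_apply, smul_eq_mul]
      rw [show (fun y => f y ^ 2 * varMat f ((2:ℝ) • x - y) i j)
          = fun y => (f y ^ 2 * f ((2:ℝ) • x - y) ^ 2) * S⁻¹ i j from funext hpt]
      rw [integral_mul_const]
    unfold Cmat
    rw [hentry, ← hI, smul_smul]
    congr 1
    rw [mul_inv]
    field_simp
  · intro lam hlam0 hlam2 x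
    have hlamsq : lam ^ 2 < 2 := by
      have h2 : (0:ℝ) ≤ 2 := by norm_num
      calc lam ^ 2 < Real.sqrt 2 ^ 2 := by
            apply pow_lt_pow_left₀ hlam2 hlam0.le
            norm_num
        _ = 2 := Real.sq_sqrt h2
    have hc : 0 < lam⁻¹ ^ 2 * (2 - lam ^ 2) := by
      have : 0 < lam⁻¹ := inv_pos.mpr hlam0
      have h2 : 0 < 2 - lam ^ 2 := by linarith
      positivity
    set T : Matrix (Fin d) (Fin d) ℝ := (lam⁻¹ ^ 2 * (2 - lam ^ 2)) • S with hT
    have hTpd : T.PosDef := by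
      refine Matrix.PosDef.of_dotProduct_mulVec_pos ?_ ?_
      · show Tᴴ = T
        rw [hT]
        simp only [Matrix.conjTranspose_smul, star_trivial]
        rw [hS.1]
      · intro v hv
        rw [hT, Matrix.smul_mulVec, dotProduct_smul]
        have := hS.dotProduct_mulVec_pos hv
        simp only [star_trivial, smul_eq_mul] at this ⊢
        exact mul_pos hc this
    set g := gaussianGM 0 T with hg
    set J : ℝ := ∫ y, f y ^ 2 * g (x - y) ^ 2 with hJ
    have hJpos : 0 < J := integral_gaussianGM_prod_pos a 0 x S T hS hTpd
    have hentry : (Matrix.of fun i j => ∫ y, varMat f y i j * g (x - y) ^ 2)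
        = J • S⁻¹ := by
      ext i j
      have hpt : ∀ y : Fin d → ℝ, varMat f y i j * g (x - y) ^ 2
          = (f y ^ 2 * g (x - y) ^ 2) * S⁻¹ i j := by
        intro y
        rw [part1]
        simp only [Matrix.smul_apply, smul_eq_mul]
        ring
      simp only [Matrix.of_apply, Matrix.smul_apply, smul_eq_mul]
      rw [show (fun y => varMat f y i j * g (x - y) ^ 2)
          = fun y => (f y ^ 2 * g (x - y) ^ 2) * S⁻¹ i j from funext hpt]
      rw [integral_mul_const]
    rw [hentry, smul_smul, smul_smul, ← add_smul]
    congr 1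
    have h2 : (2:ℝ) - lam ^ 2 ≠ 0 := by linarith
    rw [mul_inv]
    field_simp
    ring
end
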